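/- Let F have characteristic 0 and let J₁, J₃ be disjoint finite sets of indices. In A = F[x_i, y_i : i ∈ J₁ ∪ J₃], consider products of the form g = (Π_{t=1}^{k₁} x_{s_{1,t}})(Π_{t=1}^{k₂} y_{s_{2,t}})(Π_{t=1}^{k₃} (x_{i_t}x_{j_t} − y_{i_t}y_{j_t})) with s_{1,t}, i_t ∈ J₁ and s_{2,t}, j_t ∈ J₃. Identify each such g with the multiset I(g) of pairs {(N+1, s_{1,t}), (j_t, i_t), (s_{2,t}, 0)} in (J₃∪{N+1}) × ({0}∪J₁) where N+1 is larger than all elements of J₃ and 0 is smaller than all elements of J₁. If the ordered products g range over (normalized) products all having the same multiset of first-block indices I₁ and same multiset of third-block indices I₃, and such that no I(g) contains a 3-chain (three pairs (j,i), (j',i'), (j'',i'') with i<i'<i'' and j<j'<j''), then these products g are linearly independent in A. -/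

import Mathlib

open MvPolynomial

namespace Stmt13

variable (F : Type*) [Field F] [CharZero F]

/-- `x_i = X (Sum.inl i)`, `y_i = X (Sum.inr i)` in `A = F[x_i, y_i : i ∈ ℕ]`
(only variables with indices in `J₁ ∪ J₃` are used). -/
noncomputable def xv (i : ℕ) : MvPolynomial (ℕ ⊕ ℕ) F := X (Sum.inl i)
noncomputable def yv (i : ℕ) : MvPolynomial (ℕ ⊕ ℕ) F := X (Sum.inr i)

/-- A multiset `S` of index pairs contains a 3-chain if it contains three pairs
(counted with multiplicity) strictly increasing in both coordinates. -/
def HasThreeChain (S : Multiset (ℕ × ℕ)) : Prop :=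
  ∃ u v w : ℕ × ℕ, ({u, v, w} : Multiset (ℕ × ℕ)) ≤ S ∧
    u.1 < v.1 ∧ v.1 < w.1 ∧ u.2 < v.2 ∧ v.2 < w.2

/-- The set `φ(G^{I₁,I₃}_{k₁,k₂,k₃})` of normalized products
`(Π x_{s₁,t}) (Π y_{s₂,t}) (Π (x_{a_t} x_{b_t} − y_{a_t} y_{b_t}))` with prescribed
multisets `I₁` (of lower indices, from `J₁`) and `I₃` (of upper indices, from `J₃`),
whose associated multiset of pairs
`{(N+1, s₁,t)} ∪ {(b_t, a_t)} ∪ {(s₂,t, 0)}` contains no 3-chain. -/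
def G (J₁ J₃ : Finset ℕ) (N : ℕ) (I₁ I₃ : Multiset ℕ) :
    Set (MvPolynomial (ℕ ⊕ ℕ) F) :=
  { p | ∃ (k₁ k₂ k₃ : ℕ) (s₁ : Fin k₁ → ℕ) (s₂ : Fin k₂ → ℕ) (a b : Fin k₃ → ℕ),
      (∀ t, s₁ t ∈ J₁) ∧ (∀ t, s₂ t ∈ J₃) ∧ (∀ t, a t ∈ J₁) ∧ (∀ t, b t ∈ J₃) ∧
      Monotone s₁ ∧ Monotone s₂ ∧
      (∀ t t' : Fin k₃, t ≤ t' → (b t < b t' ∨ (b t = b t' ∧ a t ≤ a t'))) ∧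
      ((List.ofFn s₁ : Multiset ℕ) + (List.ofFn a : Multiset ℕ)) = I₁ ∧
      ((List.ofFn s₂ : Multiset ℕ) + (List.ofFn b : Multiset ℕ)) = I₃ ∧
      ¬ HasThreeChain
          ((List.ofFn (fun t => ((N + 1 : ℕ), s₁ t)) : Multiset (ℕ × ℕ)) +
            (List.ofFn (fun t => (b t, a t)) : Multiset (ℕ × ℕ)) +
            (List.ofFn (fun t => (s₂ t, (0 : ℕ))) : Multiset (ℕ × ℕ))) ∧
      p = (∏ t, xv F (s₁ t)) * (∏ t, yv F (s₂ t)) *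
            ∏ t, (xv F (a t) * xv F (b t) - yv F (a t) * yv F (b t)) }

/-! ### Auxiliary combinatorial layer -/

attribute [local instance] Classical.propDecidable

/-- strict dominance of pairs -/
def dmnt (p q : ℕ × ℕ) : Prop := p.1 < q.1 ∧ p.2 < q.2

/-- antichain for dominance -/
def IsAC (P : Multiset (ℕ × ℕ)) : Prop := ∀ p ∈ P, ∀ q ∈ P, ¬ dmnt p q

/-- weight of a multiset of pairs -/
def V (P : Multiset (ℕ × ℕ)) : ℕ := (P.map (fun p => p.1 * p.2)).sum

lemma V_add (A B : Multiset (ℕ × ℕ)) : V (A + B) = V A + V B := by simp [V]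

lemma V_cons (a : ℕ × ℕ) (A : Multiset (ℕ × ℕ)) : V (a ::ₘ A) = a.1 * a.2 + V A := by
  simp [V]

lemma IsAC_mono {P Q : Multiset (ℕ × ℕ)} (h : P ≤ Q) (hQ : IsAC Q) : IsAC P :=
  fun p hp q hq => hQ p (Multiset.mem_of_le h hp) q (Multiset.mem_of_le h hq)

lemma pair_le {p q : ℕ × ℕ} {M : Multiset (ℕ × ℕ)} (hp : p ∈ M) (hq : q ∈ M)
    (hne : p ≠ q) : ∃ M', M = p ::ₘ q ::ₘ M' := by
  obtain ⟨M1, rfl⟩ := Multiset.exists_cons_of_mem hp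
  have hq1 : q ∈ M1 := by
    rcases Multiset.mem_cons.mp hq with h | h
    · exact absurd h.symm hne
    · exact h
  obtain ⟨M2, rfl⟩ := Multiset.exists_cons_of_mem hq1
  exact ⟨M2, rfl⟩

lemma triple_le {p q r : ℕ × ℕ} {M : Multiset (ℕ × ℕ)} (hp : p ∈ M) (hq : q ∈ M)
    (hr : r ∈ M) (hpq : p ≠ q) (hpr : p ≠ r) (hqr : q ≠ r) :
    ({p, q, r} : Multiset (ℕ × ℕ)) ≤ M := by
  obtain ⟨M1, rfl⟩ := Multiset.exists_cons_of_mem hp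
  have hq1 : q ∈ M1 := by
    rcases Multiset.mem_cons.mp hq with h | h
    · exact absurd h.symm hpq
    · exact h
  obtain ⟨M2, rfl⟩ := Multiset.exists_cons_of_mem hq1
  have hr2 : r ∈ M2 := by
    rcases Multiset.mem_cons.mp hr with h | h
    · exact absurd h.symm hpr
    · rcases Multiset.mem_cons.mp h with h' | h'
      · exact absurd h'.symm hqr
      · exact h'
  obtain ⟨M3, rfl⟩ := Multiset.exists_cons_of_mem hr2
  show p ::ₘ q ::ₘ r ::ₘ 0 ≤ p ::ₘ q ::ₘ r ::ₘ M3
  exact Multiset.cons_le_cons _ (Multiset.cons_le_cons _ (Multiset.cons_le_cons _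
    (Multiset.zero_le M3)))

lemma exists_max (m : Multiset ℕ) (h : m ≠ 0) : ∃ R ∈ m, ∀ x ∈ m, x ≤ R := by
  induction m using Multiset.induction_on with
  | empty => exact absurd rfl h
  | cons a s ih =>
    by_cases hs : s = 0
    · subst hs; exact ⟨a, Multiset.mem_cons_self a 0, by simp⟩
    · obtain ⟨R, hR, hmax⟩ := ih hs
      refine ⟨max a R, ?_, ?_⟩
      · rcases le_total a R with h' | h'
        · simp [max_eq_right h', Multiset.mem_cons, hR]
        · simp [max_eq_left h', Multiset.mem_cons]
      · intro x hx
        rcases Multiset.mem_cons.mp hx with rfl | hx'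
        · exact le_max_left _ _
        · exact le_trans (hmax x hx') (le_max_right _ _)

lemma exists_min (m : Multiset ℕ) (h : m ≠ 0) : ∃ C ∈ m, ∀ x ∈ m, C ≤ x := by
  induction m using Multiset.induction_on with
  | empty => exact absurd rfl h
  | cons a s ih =>
    by_cases hs : s = 0
    · subst hs; exact ⟨a, Multiset.mem_cons_self a 0, by simp⟩
    · obtain ⟨C, hC, hmin⟩ := ih hs
      refine ⟨min a C, ?_, ?_⟩
      · rcases le_total a C with h' | h'
        · simp [min_eq_left h', Multiset.mem_cons]
        · simp [min_eq_right h', Multiset.mem_cons, hC]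
      · intro x hx
        rcases Multiset.mem_cons.mp hx with rfl | hx'
        · exact min_le_left _ _
        · exact le_trans (min_le_right _ _) (hmin x hx')

lemma corner_mem {P : Multiset (ℕ × ℕ)} (hAC : IsAC P)
    (R C : ℕ) (hR : ∀ q ∈ P, q.1 ≤ R) (hRmem : R ∈ P.map Prod.fst)
    (hC : ∀ q ∈ P, C ≤ q.2) (hCmem : C ∈ P.map Prod.snd) :
    (R, C) ∈ P := by
  obtain ⟨q, hq, hq1⟩ := Multiset.mem_map.mp hRmem
  obtain ⟨r, hr, hr2⟩ := Multiset.mem_map.mp hCmem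
  by_cases hqc : q.2 = C
  · have : q = (R, C) := Prod.ext hq1 hqc
    rwa [← this]
  · by_cases hrR : r.1 = R
    · have : r = (R, C) := Prod.ext hrR hr2
      rwa [← this]
    · exfalso
      have h1 : r.1 < q.1 := by have := hR r hr; omega
      have h2 : r.2 < q.2 := by have := hC q hq; omega
      exact hAC r hr q hq ⟨h1, h2⟩

lemma ac_unique : ∀ (n : ℕ) (P Q : Multiset (ℕ × ℕ)), Multiset.card P ≤ n →
    IsAC P → IsAC Q → P.map Prod.fst = Q.map Prod.fst →
    P.map Prod.snd = Q.map Prod.snd → P = Q := by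
  intro n
  induction n with
  | zero =>
    intro P Q hc _ _ h1 _
    have hP : P = 0 := by rw [← Multiset.card_eq_zero]; omega
    subst hP
    have : Multiset.card (Multiset.map Prod.fst Q) = 0 := by rw [← h1]; simp
    simp only [Multiset.card_map, Multiset.card_eq_zero] at this
    exact this.symm
  | succ n ih =>
    intro P Q hc hP hQ h1 h2
    by_cases h0 : P = 0
    · subst h0
      have : Multiset.card (Multiset.map Prod.fst Q) = 0 := by rw [← h1]; simp
      simp only [Multiset.card_map, Multiset.card_eq_zero] at this
      exact this.symm
    · have hmf : Multiset.map Prod.fst P ≠ 0 := by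
        simpa [Multiset.map_eq_zero] using h0
      obtain ⟨R, hRmem, hRmax⟩ := exists_max _ hmf
      have hms : Multiset.map Prod.snd P ≠ 0 := by
        simpa [Multiset.map_eq_zero] using h0
      obtain ⟨C, hCmem, hCmin⟩ := exists_min _ hms
      have hPc : (R, C) ∈ P :=
        corner_mem hP R C (fun q hq => hRmax _ (Multiset.mem_map_of_mem _ hq)) hRmem
          (fun q hq => hCmin _ (Multiset.mem_map_of_mem _ hq)) hCmem
      have hQc : (R, C) ∈ Q := by
        refine corner_mem hQ R C ?_ ?_ ?_ ?_
        · intro q hq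
          exact hRmax _ (h1 ▸ Multiset.mem_map_of_mem _ hq)
        · rwa [← h1]
        · intro q hq
          exact hCmin _ (h2 ▸ Multiset.mem_map_of_mem _ hq)
        · rwa [← h2]
      obtain ⟨P', rfl⟩ := Multiset.exists_cons_of_mem hPc
      obtain ⟨Q', rfl⟩ := Multiset.exists_cons_of_mem hQc
      have hP' : IsAC P' := IsAC_mono (Multiset.le_cons_self _ _) hP
      have hQ' : IsAC Q' := IsAC_mono (Multiset.le_cons_self _ _) hQ
      simp only [Multiset.map_cons, Multiset.cons_inj_right] at h1 h2
      have hc' : Multiset.card P' ≤ n := by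
        have := Multiset.card_cons (R, C) P'; omega
      rw [ih P' Q' hc' hP' hQ' h1 h2]

/-- exchange step: a non-antichain admits a strictly smaller rearrangement -/
lemma exchange {P : Multiset (ℕ × ℕ)} (hP : ¬ IsAC P) :
    ∃ P' : Multiset (ℕ × ℕ), P'.map Prod.fst = P.map Prod.fst ∧
      P'.map Prod.snd = P.map Prod.snd ∧ V P' < V P := by
  simp only [IsAC, not_forall] at hP
  obtain ⟨p, hp, q, hq, hd⟩ := hP
  have hd' : dmnt p q := not_not.mp hd
  have hne : p ≠ q := by
    intro h; rw [h] at hd'; exact lt_irrefl _ hd'.1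
  obtain ⟨M, rfl⟩ := pair_le hp hq hne
  refine ⟨(p.1, q.2) ::ₘ (q.1, p.2) ::ₘ M, ?_, ?_, ?_⟩
  · simp only [Multiset.map_cons]
  · simp only [Multiset.map_cons]
    rw [Multiset.cons_swap]
  · simp only [V_cons]
    have h1 := hd'.1
    have h2 := hd'.2
    have : p.1 * q.2 + q.1 * p.2 < p.1 * p.2 + q.1 * q.2 := by nlinarith
    omega

lemma V_min : ∀ (n : ℕ) (P Q : Multiset (ℕ × ℕ)), V P ≤ n →
    IsAC Q → P.map Prod.fst = Q.map Prod.fst → P.map Prod.snd = Q.map Prod.snd →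
    V Q ≤ V P ∧ (V Q = V P → P = Q) := by
  intro n
  induction n with
  | zero =>
    intro P Q hn hQ h1 h2
    by_cases hP : IsAC P
    · have := ac_unique (Multiset.card P) P Q le_rfl hP hQ h1 h2
      exact ⟨this ▸ le_rfl, fun _ => this⟩
    · obtain ⟨P', _, _, hV⟩ := exchange hP
      omega
  | succ n ih =>
    intro P Q hn hQ h1 h2
    by_cases hP : IsAC P
    · have := ac_unique (Multiset.card P) P Q le_rfl hP hQ h1 h2
      exact ⟨this ▸ le_rfl, fun _ => this⟩
    · obtain ⟨P', hf, hs, hV⟩ := exchange hP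
      have := ih P' Q (by omega) hQ (hf.trans h1) (hs.trans h2)
      exact ⟨by omega, by omega⟩


/-! ### The canonical decomposition predicate -/

/-- `p` belongs to the "x-part": top row or it strictly dominates some element of `M`. -/
def phiP (N : ℕ) (M : Multiset (ℕ × ℕ)) (p : ℕ × ℕ) : Prop :=
  p.1 = N + 1 ∨ ∃ q ∈ M, dmnt q p

lemma AC_X {N : ℕ} {M : Multiset (ℕ × ℕ)} (hrow : ∀ p ∈ M, p.1 ≤ N + 1)
    (hch : ¬ HasThreeChain M) : IsAC (M.filter (phiP N M)) := by
  intro p hp q hq hd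
  rw [Multiset.mem_filter] at hp hq
  rcases hp.2 with hp2 | ⟨r, hr, hrp⟩
  · have := hrow q hq.1
    have := hd.1
    omega
  · refine hch ⟨r, p, q, ?_, hrp.1, hd.1, hrp.2, hd.2⟩
    have hrnep : r ≠ p := fun h => by rw [h] at hrp; exact lt_irrefl _ hrp.1
    have hpneq : p ≠ q := fun h => by rw [h] at hd; exact lt_irrefl _ hd.1
    have hrneq : r ≠ q := fun h => by
      rw [h] at hrp
      exact lt_irrefl _ (lt_trans hrp.1 hd.1)
    exact triple_le hr hp.1 hq.1 hrnep hrneq hpneq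

lemma AC_Y {N : ℕ} {M : Multiset (ℕ × ℕ)} :
    IsAC (M.filter (fun p => ¬ phiP N M p)) := by
  intro p hp q hq hd
  rw [Multiset.mem_filter] at hp hq
  exact hq.2 (Or.inr ⟨p, hp.1, hd⟩)

/-! ### Multiset helper lemmas -/

lemma ofFn_val {α : Type*} {n : ℕ} (f : Fin n → α) :
    (↑(List.ofFn f) : Multiset α) = Multiset.map f (Finset.univ.val : Multiset (Fin n)) := by
  rw [Fin.univ_def]
  simp only [List.ofFn_eq_map]
  rw [Multiset.map_coe]

lemma sep_inl_inr {A B A' B' : Multiset ℕ}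
    (h : A.map Sum.inl + B.map Sum.inr = A'.map Sum.inl + B'.map (Sum.inr : ℕ → ℕ ⊕ ℕ)) :
    A = A' ∧ B = B' := by
  constructor <;> ext x
  · have := congrArg (Multiset.count (Sum.inl x : ℕ ⊕ ℕ)) h
    simp only [Multiset.count_add] at this
    rw [Multiset.count_map_eq_count' _ _ Sum.inl_injective,
      Multiset.count_map_eq_count' _ _ Sum.inl_injective,
      Multiset.count_eq_zero_of_notMem (s := B.map Sum.inr) (by simp),
      Multiset.count_eq_zero_of_notMem (s := B'.map Sum.inr) (by simp)] at this
    omega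
  · have := congrArg (Multiset.count (Sum.inr x : ℕ ⊕ ℕ)) h
    simp only [Multiset.count_add] at this
    rw [Multiset.count_map_eq_count' _ _ Sum.inr_injective,
      Multiset.count_map_eq_count' _ _ Sum.inr_injective,
      Multiset.count_eq_zero_of_notMem (s := A.map Sum.inl) (by simp),
      Multiset.count_eq_zero_of_notMem (s := A'.map Sum.inl) (by simp)] at this
    omega

lemma map_val_eq_sum {ι α : Type*} (s : Finset ι) (f : ι → α) :
    Multiset.map f s.val = ∑ i ∈ s, ({f i} : Multiset α) := by
  show _ = (s.val.map (fun i => ({f i} : Multiset α))).sum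
  rw [show (fun i => ({f i} : Multiset α)) = (fun x => ({x} : Multiset α)) ∘ f from rfl,
    ← Multiset.map_map, Multiset.sum_map_singleton]

lemma filter_in {ι : Type*} (P : Finset ℕ) {f : ι → ℕ} (hf : ∀ i, f i ∈ P)
    (v : Multiset ι) : (Multiset.map f v).filter (· ∈ P) = Multiset.map f v :=
  Multiset.filter_eq_self.mpr (by
    intro a ha
    obtain ⟨i, _, rfl⟩ := Multiset.mem_map.mp ha
    exact hf i)

lemma filter_out {ι : Type*} (P : Finset ℕ) {f : ι → ℕ} (hf : ∀ i, f i ∉ P)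
    (v : Multiset ι) : (Multiset.map f v).filter (· ∈ P) = 0 :=
  Multiset.filter_eq_nil.mpr (by
    intro a ha
    obtain ⟨i, _, rfl⟩ := Multiset.mem_map.mp ha
    exact hf i)

/-! ### Witness structure -/

structure Wit (J₁ J₃ : Finset ℕ) (N : ℕ) where
  k1 : ℕ
  k2 : ℕ
  k3 : ℕ
  s1 : Fin k1 → ℕ
  s2 : Fin k2 → ℕ
  a : Fin k3 → ℕ
  b : Fin k3 → ℕ
  hs1 : ∀ t, s1 t ∈ J₁
  hs2 : ∀ t, s2 t ∈ J₃
  ha : ∀ t, a t ∈ J₁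
  hb : ∀ t, b t ∈ J₃
  hch : ¬ HasThreeChain
      ((List.ofFn (fun t => ((N + 1 : ℕ), s1 t)) : Multiset (ℕ × ℕ)) +
        (List.ofFn (fun t => (b t, a t)) : Multiset (ℕ × ℕ)) +
        (List.ofFn (fun t => (s2 t, (0 : ℕ))) : Multiset (ℕ × ℕ)))

namespace Wit

variable {J₁ J₃ : Finset ℕ} {N : ℕ} (w : Wit J₁ J₃ N)

/-- the multiset of pairs associated with a witness -/
def M : Multiset (ℕ × ℕ) :=
  ((List.ofFn (fun t => ((N + 1 : ℕ), w.s1 t)) : Multiset (ℕ × ℕ)) +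
    (List.ofFn (fun t => (w.b t, w.a t)) : Multiset (ℕ × ℕ)) +
    (List.ofFn (fun t => (w.s2 t, (0 : ℕ))) : Multiset (ℕ × ℕ)))

/-- the polynomial of a witness -/
noncomputable def poly : MvPolynomial (ℕ ⊕ ℕ) F :=
  (∏ t, xv F (w.s1 t)) * (∏ t, yv F (w.s2 t)) *
    ∏ t, (xv F (w.a t) * xv F (w.b t) - yv F (w.a t) * yv F (w.b t))

/-- x-part of the decomposition indexed by `S` -/
def Xm (S : Finset (Fin w.k3)) : Multiset (ℕ × ℕ) :=
  Multiset.map (fun t => ((N + 1 : ℕ), w.s1 t)) Finset.univ.val +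
    Multiset.map (fun t => (w.b t, w.a t)) S.val

/-- y-part of the decomposition indexed by `S` -/
def Ym (S : Finset (Fin w.k3)) : Multiset (ℕ × ℕ) :=
  Multiset.map (fun t => (w.b t, w.a t)) Sᶜ.val +
    Multiset.map (fun t => (w.s2 t, (0 : ℕ))) Finset.univ.val

/-- multiset of x-indices of the monomial indexed by `S` -/
def EX (S : Finset (Fin w.k3)) : Multiset ℕ :=
  Multiset.map w.s1 Finset.univ.val + Multiset.map w.a S.val + Multiset.map w.b S.val

/-- multiset of y-indices of the monomial indexed by `S` -/
def EY (S : Finset (Fin w.k3)) : Multiset ℕ :=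
  Multiset.map w.s2 Finset.univ.val + Multiset.map w.a Sᶜ.val + Multiset.map w.b Sᶜ.val

/-- the combined index multiset of the monomial indexed by `S` -/
def EE (S : Finset (Fin w.k3)) : Multiset (ℕ ⊕ ℕ) :=
  (w.EX S).map Sum.inl + (w.EY S).map Sum.inr

/-- the exponent (monomial) indexed by `S` -/
noncomputable def D (S : Finset (Fin w.k3)) : (ℕ ⊕ ℕ) →₀ ℕ := Multiset.toFinsupp (w.EE S)

/-- the canonical subset: factors whose pair dominates something in `M` -/
noncomputable def S0 : Finset (Fin w.k3) :=
  Finset.univ.filter (fun t => phiP N w.M (w.b t, w.a t))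

lemma M_eq (S : Finset (Fin w.k3)) : w.M = w.Xm S + w.Ym S := by
  unfold M Xm Ym
  rw [ofFn_val, ofFn_val, ofFn_val]
  rw [map_val_eq_sum Finset.univ (fun t => (w.b t, w.a t)),
    ← Finset.sum_add_sum_compl S (fun t => ({(w.b t, w.a t)} : Multiset (ℕ × ℕ))),
    ← map_val_eq_sum S, ← map_val_eq_sum Sᶜ]
  abel


lemma prod_monomial {ι : Type*} (s : Finset ι) (d : ι → ((ℕ ⊕ ℕ) →₀ ℕ)) :
    ∏ i ∈ s, (monomial (d i) (1 : F)) = monomial (∑ i ∈ s, d i) (1 : F) := by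
  classical
  induction s using Finset.induction_on with
  | empty => simp
  | insert a s hnotmem ih =>
    rw [Finset.prod_insert hnotmem, Finset.sum_insert hnotmem, ih, monomial_mul, one_mul]

lemma D_spec (S : Finset (Fin w.k3)) :
    (w.D S : (ℕ ⊕ ℕ) →₀ ℕ) =
      (∑ t, Finsupp.single (Sum.inl (w.s1 t)) 1) +
      (∑ t, Finsupp.single (Sum.inr (w.s2 t)) 1) +
      (∑ t ∈ S, (Finsupp.single (Sum.inl (w.a t)) 1 + Finsupp.single (Sum.inl (w.b t)) 1)) +
      (∑ t ∈ Sᶜ, (Finsupp.single (Sum.inr (w.a t)) 1 + Finsupp.single (Sum.inr (w.b t)) 1)) := by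
  have key : Finsupp.toMultiset
      ((∑ t, Finsupp.single (Sum.inl (w.s1 t)) 1) +
      (∑ t, Finsupp.single (Sum.inr (w.s2 t)) 1) +
      (∑ t ∈ S, (Finsupp.single (Sum.inl (w.a t)) 1 + Finsupp.single (Sum.inl (w.b t)) 1)) +
      (∑ t ∈ Sᶜ, (Finsupp.single (Sum.inr (w.a t)) 1 + Finsupp.single (Sum.inr (w.b t)) 1)))
      = w.EE S := by
    rw [map_add, map_add, map_add, map_sum, map_sum, map_sum, map_sum]
    simp only [map_add, Finsupp.toMultiset_single, one_smul]
    rw [Finset.sum_add_distrib, Finset.sum_add_distrib]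
    rw [← map_val_eq_sum Finset.univ (fun t => (Sum.inl (w.s1 t) : ℕ ⊕ ℕ)),
      ← map_val_eq_sum Finset.univ (fun t => (Sum.inr (w.s2 t) : ℕ ⊕ ℕ)),
      ← map_val_eq_sum S (fun t => (Sum.inl (w.a t) : ℕ ⊕ ℕ)),
      ← map_val_eq_sum S (fun t => (Sum.inl (w.b t) : ℕ ⊕ ℕ)),
      ← map_val_eq_sum Sᶜ (fun t => (Sum.inr (w.a t) : ℕ ⊕ ℕ)),
      ← map_val_eq_sum Sᶜ (fun t => (Sum.inr (w.b t) : ℕ ⊕ ℕ))]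
    unfold EE EX EY
    simp only [Multiset.map_add, Multiset.map_map, Function.comp]
    abel
  unfold D
  rw [← key, Finsupp.toMultiset_toFinsupp]

lemma coeff_poly (μ : (ℕ ⊕ ℕ) →₀ ℕ) :
    coeff μ (w.poly F) =
      ∑ S : Finset (Fin w.k3), if w.D S = μ then ((-1 : F) ^ (w.k3 - S.card)) else 0 := by
  classical
  have hx : ∀ v : ℕ ⊕ ℕ, (X v : MvPolynomial (ℕ ⊕ ℕ) F) = monomial (Finsupp.single v 1) 1 :=
    fun v => rfl
  have h1 : (∏ t, xv F (w.s1 t)) =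
      monomial (∑ t, Finsupp.single (Sum.inl (w.s1 t) : ℕ ⊕ ℕ) 1) (1 : F) := by
    rw [← prod_monomial]
    exact Finset.prod_congr rfl (fun t _ => by rw [xv, hx])
  have h2 : (∏ t, yv F (w.s2 t)) =
      monomial (∑ t, Finsupp.single (Sum.inr (w.s2 t) : ℕ ⊕ ℕ) 1) (1 : F) := by
    rw [← prod_monomial]
    exact Finset.prod_congr rfl (fun t _ => by rw [yv, hx])
  have h3 : (∏ t, (xv F (w.a t) * xv F (w.b t) - yv F (w.a t) * yv F (w.b t))) =
      ∑ S ∈ (Finset.univ : Finset (Fin w.k3)).powerset,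
        (-1 : F) ^ (w.k3 - S.card) •
          monomial ((∑ t ∈ S, (Finsupp.single (Sum.inl (w.a t) : ℕ ⊕ ℕ) 1
              + Finsupp.single (Sum.inl (w.b t)) 1)) +
            ∑ t ∈ Finset.univ \ S, (Finsupp.single (Sum.inr (w.a t) : ℕ ⊕ ℕ) 1
              + Finsupp.single (Sum.inr (w.b t)) 1)) (1 : F) := by
    have hfac : ∀ t : Fin w.k3,
        (xv F (w.a t) * xv F (w.b t) - yv F (w.a t) * yv F (w.b t)) =
          monomial (Finsupp.single (Sum.inl (w.a t) : ℕ ⊕ ℕ) 1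
            + Finsupp.single (Sum.inl (w.b t)) 1) (1 : F) +
          (- monomial (Finsupp.single (Sum.inr (w.a t) : ℕ ⊕ ℕ) 1
            + Finsupp.single (Sum.inr (w.b t)) 1) (1 : F)) := by
      intro t
      rw [sub_eq_add_neg, xv, xv, yv, yv, hx, hx, hx, hx, monomial_mul, monomial_mul, one_mul]
    rw [Finset.prod_congr rfl (fun t _ => hfac t), Finset.prod_add]
    refine Finset.sum_congr rfl (fun S hS => ?_)
    have hneg : ∏ t ∈ Finset.univ \ S,
        (- monomial (Finsupp.single (Sum.inr (w.a t) : ℕ ⊕ ℕ) 1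
          + Finsupp.single (Sum.inr (w.b t)) 1) (1 : F)) =
        (-1 : MvPolynomial (ℕ ⊕ ℕ) F) ^ (w.k3 - S.card) *
          monomial (∑ t ∈ Finset.univ \ S, (Finsupp.single (Sum.inr (w.a t) : ℕ ⊕ ℕ) 1
            + Finsupp.single (Sum.inr (w.b t)) 1)) (1 : F) := by
      rw [← prod_monomial]
      have : ∀ t ∈ Finset.univ \ S,
          (- monomial (Finsupp.single (Sum.inr (w.a t) : ℕ ⊕ ℕ) 1
            + Finsupp.single (Sum.inr (w.b t)) 1) (1 : F)) =
          (-1 : MvPolynomial (ℕ ⊕ ℕ) F) *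
            monomial (Finsupp.single (Sum.inr (w.a t) : ℕ ⊕ ℕ) 1
              + Finsupp.single (Sum.inr (w.b t)) 1) (1 : F) := by
        intro t _; ring
      rw [Finset.prod_congr rfl this, Finset.prod_mul_distrib, Finset.prod_const,
        Finset.card_sdiff_of_subset (Finset.subset_univ S), Finset.card_univ, Fintype.card_fin]
    have hm1 : (-1 : MvPolynomial (ℕ ⊕ ℕ) F) ^ (w.k3 - S.card) = C ((-1 : F) ^ (w.k3 - S.card)) := by
      rw [map_pow, map_neg, map_one]
    rw [hneg, hm1, prod_monomial, C_mul_monomial, mul_one, monomial_mul, one_mul,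
      smul_eq_C_mul, C_mul_monomial, mul_one]
  unfold poly
  rw [h1, h2, h3, Finset.mul_sum]
  have hterm : ∀ S ∈ (Finset.univ : Finset (Fin w.k3)).powerset,
      (monomial (∑ t, Finsupp.single (Sum.inl (w.s1 t) : ℕ ⊕ ℕ) 1) (1 : F) *
        monomial (∑ t, Finsupp.single (Sum.inr (w.s2 t) : ℕ ⊕ ℕ) 1) (1 : F)) *
        ((-1 : F) ^ (w.k3 - S.card) • monomial ((∑ t ∈ S, (Finsupp.single (Sum.inl (w.a t) : ℕ ⊕ ℕ) 1
              + Finsupp.single (Sum.inl (w.b t)) 1)) +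
            ∑ t ∈ Finset.univ \ S, (Finsupp.single (Sum.inr (w.a t) : ℕ ⊕ ℕ) 1
              + Finsupp.single (Sum.inr (w.b t)) 1)) (1 : F)) =
      monomial (w.D S) ((-1 : F) ^ (w.k3 - S.card)) := by
    intro S _
    rw [smul_eq_C_mul, monomial_mul, one_mul, C_mul_monomial, mul_one, monomial_mul,
      one_mul, D_spec]
    congr 1
    rw [Finset.compl_eq_univ_sdiff]
    abel
  rw [Finset.sum_congr rfl hterm, coeff_sum]
  rw [Finset.powerset_univ]
  refine Finset.sum_congr rfl (fun S _ => ?_)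
  rw [coeff_monomial]

lemma card_univ_val {n : ℕ} : Multiset.card (Finset.univ.val : Multiset (Fin n)) = n := by
  simpa using Fintype.card_fin n

lemma margins (hdisj : Disjoint J₁ J₃) {w' : Wit J₁ J₃ N} {S : Finset (Fin w.k3)}
    {S' : Finset (Fin w'.k3)} (h : w.EE S = w'.EE S') :
    (w.Xm S).map Prod.fst = (w'.Xm S').map Prod.fst ∧
    (w.Xm S).map Prod.snd = (w'.Xm S').map Prod.snd ∧
    (w.Ym S).map Prod.fst = (w'.Ym S').map Prod.fst ∧
    (w.Ym S).map Prod.snd = (w'.Ym S').map Prod.snd ∧ S.card = S'.card := by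
  obtain ⟨hEX, hEY⟩ := sep_inl_inr h
  have hbJ1 : ∀ t, w.b t ∉ J₁ := fun t => Finset.disjoint_right.mp hdisj (w.hb t)
  have hbJ1' : ∀ t, w'.b t ∉ J₁ := fun t => Finset.disjoint_right.mp hdisj (w'.hb t)
  have hs1J3 : ∀ t, w.s1 t ∉ J₃ := fun t => Finset.disjoint_left.mp hdisj (w.hs1 t)
  have hs1J3' : ∀ t, w'.s1 t ∉ J₃ := fun t => Finset.disjoint_left.mp hdisj (w'.hs1 t)
  have haJ3 : ∀ t, w.a t ∉ J₃ := fun t => Finset.disjoint_left.mp hdisj (w.ha t)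
  have haJ3' : ∀ t, w'.a t ∉ J₃ := fun t => Finset.disjoint_left.mp hdisj (w'.ha t)
  have hs2J1 : ∀ t, w.s2 t ∉ J₁ := fun t => Finset.disjoint_right.mp hdisj (w.hs2 t)
  have hs2J1' : ∀ t, w'.s2 t ∉ J₁ := fun t => Finset.disjoint_right.mp hdisj (w'.hs2 t)
  have e1 : Multiset.map w.s1 Finset.univ.val + Multiset.map w.a S.val =
      Multiset.map w'.s1 Finset.univ.val + Multiset.map w'.a S'.val := by
    have := congrArg (Multiset.filter (· ∈ J₁)) hEX
    unfold EX at this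
    rw [Multiset.filter_add, Multiset.filter_add, Multiset.filter_add, Multiset.filter_add,
      filter_in J₁ w.hs1, filter_in J₁ w.ha, filter_out J₁ hbJ1,
      filter_in J₁ w'.hs1, filter_in J₁ w'.ha, filter_out J₁ hbJ1'] at this
    simpa using this
  have e2 : Multiset.map w.b S.val = Multiset.map w'.b S'.val := by
    have := congrArg (Multiset.filter (· ∈ J₃)) hEX
    unfold EX at this
    rw [Multiset.filter_add, Multiset.filter_add, Multiset.filter_add, Multiset.filter_add,
      filter_out J₃ hs1J3, filter_out J₃ haJ3, filter_in J₃ w.hb,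
      filter_out J₃ hs1J3', filter_out J₃ haJ3', filter_in J₃ w'.hb] at this
    simpa using this
  have e3 : Multiset.map w.s2 Finset.univ.val + Multiset.map w.b Sᶜ.val =
      Multiset.map w'.s2 Finset.univ.val + Multiset.map w'.b S'ᶜ.val := by
    have := congrArg (Multiset.filter (· ∈ J₃)) hEY
    unfold EY at this
    rw [Multiset.filter_add, Multiset.filter_add, Multiset.filter_add, Multiset.filter_add,
      filter_in J₃ w.hs2, filter_out J₃ haJ3, filter_in J₃ w.hb,
      filter_in J₃ w'.hs2, filter_out J₃ haJ3', filter_in J₃ w'.hb] at this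
    simpa using this
  have e4 : Multiset.map w.a Sᶜ.val = Multiset.map w'.a S'ᶜ.val := by
    have := congrArg (Multiset.filter (· ∈ J₁)) hEY
    unfold EY at this
    rw [Multiset.filter_add, Multiset.filter_add, Multiset.filter_add, Multiset.filter_add,
      filter_out J₁ hs2J1, filter_in J₁ w.ha, filter_out J₁ hbJ1,
      filter_out J₁ hs2J1', filter_in J₁ w'.ha, filter_out J₁ hbJ1'] at this
    simpa using this
  have hScard : S.card = S'.card := by
    have := congrArg Multiset.card e2
    simpa using this
  have hk1 : w.k1 = w'.k1 := by
    have := congrArg Multiset.card e1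
    simp only [Multiset.card_add, Multiset.card_map, card_univ_val] at this
    have hsc : Multiset.card S.val = S.card := rfl
    have hsc' : Multiset.card S'.val = S'.card := rfl
    rw [hsc, hsc'] at this
    omega
  have hk2 : w.k2 = w'.k2 := by
    have h3 := congrArg Multiset.card e3
    have h4 := congrArg Multiset.card e4
    simp only [Multiset.card_add, Multiset.card_map, card_univ_val] at h3 h4
    omega
  refine ⟨?_, ?_, ?_, ?_, hScard⟩
  · unfold Xm
    simp only [Multiset.map_add, Multiset.map_map, Function.comp]
    rw [e2]
    have : ∀ (m : ℕ), Multiset.map (fun (_ : Fin m) => N + 1) Finset.univ.val =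
        Multiset.replicate m (N + 1) := by
      intro m
      rw [show (fun (_ : Fin m) => N + 1) = Function.const (Fin m) (N+1) from rfl,
        Multiset.map_const, card_univ_val]
    rw [this w.k1, this w'.k1, hk1]
  · unfold Xm
    simp only [Multiset.map_add, Multiset.map_map, Function.comp]
    exact e1
  · unfold Ym
    simp only [Multiset.map_add, Multiset.map_map, Function.comp]
    have := e3
    rw [add_comm (Multiset.map w.s2 Finset.univ.val), add_comm (Multiset.map w'.s2 Finset.univ.val)] at this
    exact this
  · unfold Ym
    simp only [Multiset.map_add, Multiset.map_map, Function.comp]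
    rw [e4]
    have : ∀ (m : ℕ), Multiset.map (fun (_ : Fin m) => (0:ℕ)) Finset.univ.val =
        Multiset.replicate m 0 := by
      intro m
      rw [show (fun (_ : Fin m) => (0:ℕ)) = Function.const (Fin m) 0 from rfl,
        Multiset.map_const, card_univ_val]
    rw [this w.k2, this w'.k2, hk2]

lemma hrow (hJ₃ : ∀ j ∈ J₃, j ≤ N) : ∀ p ∈ w.M, p.1 ≤ N + 1 := by
  intro p hp
  unfold M at hp
  rw [Multiset.mem_add, Multiset.mem_add] at hp
  rcases hp with (hp | hp) | hp
  · rw [Multiset.mem_coe, List.mem_ofFn] at hp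
    obtain ⟨t, rfl⟩ := hp
    exact le_rfl
  · rw [Multiset.mem_coe, List.mem_ofFn] at hp
    obtain ⟨t, rfl⟩ := hp
    have := hJ₃ _ (w.hb t)
    simpa using by omega
  · rw [Multiset.mem_coe, List.mem_ofFn] at hp
    obtain ⟨t, rfl⟩ := hp
    have := hJ₃ _ (w.hs2 t)
    simpa using by omega

lemma filter_phi (hJ₁ : ∀ i ∈ J₁, 0 < i) (hJ₃ : ∀ j ∈ J₃, j ≤ N) :
    w.M.filter (phiP N w.M) = w.Xm w.S0 ∧
      w.M.filter (fun p => ¬ phiP N w.M p) = w.Ym w.S0 := by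
  have hM : w.M = Multiset.map (fun t => ((N + 1 : ℕ), w.s1 t)) Finset.univ.val +
      Multiset.map (fun t => (w.b t, w.a t)) Finset.univ.val +
      Multiset.map (fun t => (w.s2 t, (0 : ℕ))) Finset.univ.val := by
    unfold M
    rw [ofFn_val, ofFn_val, ofFn_val]
  have hb1 : ∀ q ∈ Multiset.map (fun t => ((N + 1 : ℕ), w.s1 t)) Finset.univ.val,
      phiP N w.M q := by
    intro q hq
    obtain ⟨t, _, rfl⟩ := Multiset.mem_map.mp hq
    exact Or.inl rfl
  have hb3 : ∀ q ∈ Multiset.map (fun t => (w.s2 t, (0 : ℕ))) Finset.univ.val,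
      ¬ phiP N w.M q := by
    intro q hq
    obtain ⟨t, _, rfl⟩ := Multiset.mem_map.mp hq
    rintro (h | ⟨r, _, hr⟩)
    · have := hJ₃ _ (w.hs2 t)
      simp only at h
      omega
    · exact Nat.not_lt_zero _ hr.2
  have hmid : Multiset.filter (phiP N w.M ∘ fun t => (w.b t, w.a t))
        Finset.univ.val = (w.S0).val := by
    rw [← Finset.filter_val]
    rfl
  constructor
  · have hsplit := congrArg (fun m : Multiset (ℕ × ℕ) => m.filter (phiP N w.M)) hM
    rw [hsplit]
    rw [Multiset.filter_add, Multiset.filter_add,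
      Multiset.filter_eq_self.mpr hb1,
      Multiset.filter_eq_nil.mpr hb3, add_zero,
      Multiset.filter_map, hmid]
    rfl
  · have hsplit := congrArg (fun m : Multiset (ℕ × ℕ) => m.filter (fun p => ¬ phiP N w.M p)) hM
    rw [hsplit]
    rw [Multiset.filter_add, Multiset.filter_add,
      Multiset.filter_eq_nil.mpr (by intro q hq h; exact h (hb1 q hq)),
      Multiset.filter_eq_self.mpr hb3, zero_add,
      Multiset.filter_map]
    have : Multiset.filter ((fun p => ¬ phiP N w.M p) ∘ (fun t => (w.b t, w.a t)))
        Finset.univ.val = (w.S0)ᶜ.val := by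
      rw [← Finset.filter_val]
      congr 1
      ext t
      simp [S0, Function.comp]
    rw [this]
    rfl

lemma keyc (hdisj : Disjoint J₁ J₃) (hJ₁ : ∀ i ∈ J₁, 0 < i) (hJ₃ : ∀ j ∈ J₃, j ≤ N)
    {w0 : Wit J₁ J₃ N} (hV : V w.M ≤ V w0.M)
    {S : Finset (Fin w.k3)} (hEE : w.EE S = w0.EE w0.S0) :
    w.M = w0.M ∧ S.card = w0.S0.card := by
  obtain ⟨m1, m2, m3, m4, hcard⟩ := margins w hdisj hEE
  have hXAC : IsAC (w0.Xm w0.S0) := by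
    rw [← (filter_phi w0 hJ₁ hJ₃).1]
    exact AC_X (hrow w0 hJ₃) w0.hch
  have hYAC : IsAC (w0.Ym w0.S0) := by
    rw [← (filter_phi w0 hJ₁ hJ₃).2]
    exact AC_Y
  have VX := V_min (V (w.Xm S)) (w.Xm S) (w0.Xm w0.S0) le_rfl hXAC m1 m2
  have VY := V_min (V (w.Ym S)) (w.Ym S) (w0.Ym w0.S0) le_rfl hYAC m3 m4
  have hVw : V w.M = V (w.Xm S) + V (w.Ym S) := by rw [M_eq w S, V_add]
  have hVw0 : V w0.M = V (w0.Xm w0.S0) + V (w0.Ym w0.S0) := by rw [M_eq w0 w0.S0, V_add]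
  have hXeq : w.Xm S = w0.Xm w0.S0 := VX.2 (by omega)
  have hYeq : w.Ym S = w0.Ym w0.S0 := VY.2 (by omega)
  exact ⟨by rw [M_eq w S, hXeq, hYeq, ← M_eq w0 w0.S0], hcard⟩

end Wit

/-- reconstruction of the polynomial from the multiset of pairs -/
noncomputable def Phi (N : ℕ) (M : Multiset (ℕ × ℕ)) : MvPolynomial (ℕ ⊕ ℕ) F :=
  ((M.filter (fun q => q.1 = N + 1)).map (fun q => xv F q.2)).prod *
    ((M.filter (fun q => q.1 ≠ N + 1 ∧ q.2 = 0)).map (fun q => yv F q.1)).prod *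
    ((M.filter (fun q => q.1 ≠ N + 1 ∧ q.2 ≠ 0)).map
      (fun q => xv F q.2 * xv F q.1 - yv F q.2 * yv F q.1)).prod

namespace Wit

variable {J₁ J₃ : Finset ℕ} {N : ℕ} (w : Wit J₁ J₃ N)

lemma poly_eq_Phi (hJ₁ : ∀ i ∈ J₁, 0 < i) (hJ₃ : ∀ j ∈ J₃, j ≤ N) :
    w.poly F = Phi F N w.M := by
  have hM : w.M = Multiset.map (fun t => ((N + 1 : ℕ), w.s1 t)) Finset.univ.val +
      Multiset.map (fun t => (w.b t, w.a t)) Finset.univ.val +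
      Multiset.map (fun t => (w.s2 t, (0 : ℕ))) Finset.univ.val := by
    unfold M
    rw [ofFn_val, ofFn_val, ofFn_val]
  have ha0 : ∀ t, w.a t ≠ 0 := fun t => Nat.pos_iff_ne_zero.mp (hJ₁ _ (w.ha t))
  have hbN : ∀ t, w.b t ≠ N + 1 := fun t => by have := hJ₃ _ (w.hb t); omega
  have hs2N : ∀ t, w.s2 t ≠ N + 1 := fun t => by have := hJ₃ _ (w.hs2 t); omega
  have f1 : w.M.filter (fun q => q.1 = N + 1) =
      Multiset.map (fun t => ((N + 1 : ℕ), w.s1 t)) Finset.univ.val := by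
    have h := congrArg (fun m : Multiset (ℕ × ℕ) => m.filter (fun q => q.1 = N + 1)) hM
    rw [h, Multiset.filter_add, Multiset.filter_add,
      Multiset.filter_eq_self.mpr (fun q hq => by
        obtain ⟨t, _, rfl⟩ := Multiset.mem_map.mp hq; rfl),
      Multiset.filter_eq_nil.mpr (fun q hq => by
        obtain ⟨t, _, rfl⟩ := Multiset.mem_map.mp hq; exact hbN t),
      Multiset.filter_eq_nil.mpr (fun q hq => by
        obtain ⟨t, _, rfl⟩ := Multiset.mem_map.mp hq; exact hs2N t),
      add_zero, add_zero]
  have f2 : w.M.filter (fun q => q.1 ≠ N + 1 ∧ q.2 = 0) =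
      Multiset.map (fun t => (w.s2 t, (0 : ℕ))) Finset.univ.val := by
    have h := congrArg
      (fun m : Multiset (ℕ × ℕ) => m.filter (fun q => q.1 ≠ N + 1 ∧ q.2 = 0)) hM
    rw [h, Multiset.filter_add, Multiset.filter_add,
      Multiset.filter_eq_nil.mpr (fun q hq => by
        obtain ⟨t, _, rfl⟩ := Multiset.mem_map.mp hq
        exact fun hcon => hcon.1 rfl),
      Multiset.filter_eq_nil.mpr (fun q hq => by
        obtain ⟨t, _, rfl⟩ := Multiset.mem_map.mp hq
        exact fun hcon => ha0 t hcon.2),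
      Multiset.filter_eq_self.mpr (fun q hq => by
        obtain ⟨t, _, rfl⟩ := Multiset.mem_map.mp hq
        exact ⟨hs2N t, rfl⟩),
      zero_add, zero_add]
  have f3 : w.M.filter (fun q => q.1 ≠ N + 1 ∧ q.2 ≠ 0) =
      Multiset.map (fun t => (w.b t, w.a t)) Finset.univ.val := by
    have h := congrArg
      (fun m : Multiset (ℕ × ℕ) => m.filter (fun q => q.1 ≠ N + 1 ∧ q.2 ≠ 0)) hM
    rw [h, Multiset.filter_add, Multiset.filter_add,
      Multiset.filter_eq_nil.mpr (fun q hq => by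
        obtain ⟨t, _, rfl⟩ := Multiset.mem_map.mp hq
        exact fun hcon => hcon.1 rfl),
      Multiset.filter_eq_self.mpr (fun q hq => by
        obtain ⟨t, _, rfl⟩ := Multiset.mem_map.mp hq
        exact ⟨hbN t, ha0 t⟩),
      Multiset.filter_eq_nil.mpr (fun q hq => by
        obtain ⟨t, _, rfl⟩ := Multiset.mem_map.mp hq
        exact fun hcon => hcon.2 rfl),
      add_zero, zero_add]
  unfold poly Phi
  rw [f1, f2, f3, Multiset.map_map, Multiset.map_map, Multiset.map_map]
  rfl

end Wit

lemma exists_wit {J₁ J₃ : Finset ℕ} {N : ℕ} {I₁ I₃ : Multiset ℕ}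
    {p : MvPolynomial (ℕ ⊕ ℕ) F} (hp : p ∈ G F J₁ J₃ N I₁ I₃) :
    ∃ w : Wit J₁ J₃ N, p = w.poly F := by
  obtain ⟨k1, k2, k3, s1, s2, a, b, hs1, hs2, ha, hb, _, _, _, _, _, hch, hpe⟩ := hp
  exact ⟨⟨k1, k2, k3, s1, s2, a, b, hs1, hs2, ha, hb, hch⟩, hpe⟩


/-- Lemma 3.2: the normalized products with fixed index multisets
`I₁, I₃` and no 3-chain are linearly independent. -/
theorem G_linearIndependent (J₁ J₃ : Finset ℕ) (N : ℕ)
    (hdisj : Disjoint J₁ J₃) (hJ₁ : ∀ i ∈ J₁, 0 < i) (hJ₃ : ∀ j ∈ J₃, j ≤ N)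
    (I₁ I₃ : Multiset ℕ) :
    LinearIndependent F
      (fun p : (G F J₁ J₃ N I₁ I₃) => (p : MvPolynomial (ℕ ⊕ ℕ) F)) := by
  rw [linearIndependent_iff']
  intro s c hsum i₀ hi₀
  by_contra hc0
  have hwit : ∀ i : (G F J₁ J₃ N I₁ I₃), ∃ w : Wit J₁ J₃ N,
      (i : MvPolynomial (ℕ ⊕ ℕ) F) = w.poly F := fun i => exists_wit F i.2
  choose w hw using hwit
  set T := s.filter (fun i => c i ≠ 0) with hT
  have hTne : T.Nonempty := ⟨i₀, Finset.mem_filter.mpr ⟨hi₀, hc0⟩⟩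
  obtain ⟨p₀, hp₀T, hmax⟩ := Finset.exists_max_image T (fun i => V (w i).M) hTne
  have hp₀s : p₀ ∈ s := Finset.mem_of_mem_filter _ hp₀T
  have hc₀ : c p₀ ≠ 0 := (Finset.mem_filter.mp hp₀T).2
  set w0 := w p₀ with hw0
  set μ₀ := w0.D w0.S0 with hμ₀
  -- if some monomial of (w i) matches μ₀ and i is in the support, then i = p₀
  have hkey : ∀ i ∈ T, ∀ S : Finset (Fin (w i).k3), (w i).D S = μ₀ → i = p₀ ∧
      S.card = w0.S0.card := by
    intro i hiT S hDS
    have hEE : (w i).EE S = w0.EE w0.S0 := by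
      have h1 := congrArg Finsupp.toMultiset hDS
      rwa [hμ₀, Wit.D, Wit.D, Multiset.toFinsupp_toMultiset,
        Multiset.toFinsupp_toMultiset] at h1
    have hVle : V (w i).M ≤ V w0.M := hmax i hiT
    obtain ⟨hMeq, hcard⟩ := (w i).keyc hdisj hJ₁ hJ₃ hVle hEE
    have hpoly : (i : MvPolynomial (ℕ ⊕ ℕ) F) = (p₀ : MvPolynomial (ℕ ⊕ ℕ) F) := by
      rw [hw i, hw p₀, (w i).poly_eq_Phi F hJ₁ hJ₃, (w p₀).poly_eq_Phi F hJ₁ hJ₃, hMeq]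
    exact ⟨Subtype.coe_injective hpoly, hcard⟩
  -- extract the coefficient of μ₀
  have hco := congrArg (coeff μ₀) hsum
  rw [coeff_sum, coeff_zero] at hco
  have hco2 : ∑ i ∈ s, c i * coeff μ₀ ((w i).poly F) = 0 := by
    rw [← hco]
    exact (Finset.sum_congr rfl (fun i _ => by rw [coeff_smul, hw i, smul_eq_mul])).symm
  have hsingle : ∑ i ∈ s, c i * coeff μ₀ ((w i).poly F) =
      c p₀ * coeff μ₀ (w0.poly F) := by
    refine Finset.sum_eq_single p₀ ?_ (fun h => absurd hp₀s h)
    intro i his hine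
    by_cases hci : c i = 0
    · rw [hci, zero_mul]
    · have hiT : i ∈ T := Finset.mem_filter.mpr ⟨his, hci⟩
      have : coeff μ₀ ((w i).poly F) = 0 := by
        rw [Wit.coeff_poly]
        refine Finset.sum_eq_zero (fun S _ => ?_)
        rw [if_neg]
        intro hDS
        exact hine (hkey i hiT S hDS).1
      rw [this, mul_zero]
  -- the coefficient of μ₀ in w0.poly is nonzero
  have hnz : coeff μ₀ (w0.poly F) ≠ 0 := by
    rw [Wit.coeff_poly]
    have hcongr : ∀ S ∈ (Finset.univ : Finset (Finset (Fin w0.k3))),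
        (if w0.D S = μ₀ then ((-1 : F) ^ (w0.k3 - S.card)) else 0) =
        (if w0.D S = μ₀ then ((-1 : F) ^ (w0.k3 - w0.S0.card)) else 0) := by
      intro S _
      by_cases hDS : w0.D S = μ₀
      · rw [if_pos hDS, if_pos hDS, (hkey p₀ hp₀T S hDS).2]
      · rw [if_neg hDS, if_neg hDS]
    rw [Finset.sum_congr rfl hcongr, ← Finset.sum_filter, Finset.sum_const]
    have hmem : w0.S0 ∈ Finset.univ.filter (fun S => w0.D S = μ₀) :=
      Finset.mem_filter.mpr ⟨Finset.mem_univ _, rfl⟩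
    have hcpos : 0 < (Finset.univ.filter (fun S => w0.D S = μ₀)).card :=
      Finset.card_pos.mpr ⟨w0.S0, hmem⟩
    rw [nsmul_eq_mul]
    exact mul_ne_zero (Nat.cast_ne_zero.mpr (Nat.pos_iff_ne_zero.mp hcpos))
      (pow_ne_zero _ (neg_ne_zero.mpr one_ne_zero))
  rw [hsingle] at hco2
  exact hc₀ ((mul_eq_zero.mp hco2).resolve_right hnz)

end Stmt13
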